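/- Let V be a nonempty finite set and let s ≥ 2 be an integer. For every even integer ℓ ≥ 2, the quantity ‖·‖_{□_ℓ(V^s)} is a norm on the real vector space of functions V^s → ℝ (it is nonnegative, vanishes exactly at the zero function, is absolutely homogeneous, and satisfies the triangle inequality). Moreover, if ℓ_1 ≤ ℓ_2 are even integers with ℓ_1 ≥ 2, then ‖F‖_{□_{ℓ_1}(V^s)} ≤ ‖F‖_{□_{ℓ_2}(V^s)} for every F : V^s → ℝ. -/

import Mathlib

open Finset

/-- The average of a real-valued function on a finite type. -/
noncomputable def avg (α : Type*) [Fintype α] (f : α → ℝ) : ℝ :=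
  (∑ x, f x) / (Fintype.card α : ℝ)

/-- The `ℓ`-box norm `‖F‖_{□_ℓ(V^s)}` of `F : V^s → ℝ`.  Here `V^{s×ℓ}` is modelled as
`Fin s → Fin ℓ → V`, an element `ω ∈ [ℓ]^s` as `ω : Fin s → Fin ℓ`, and the projection
`π_ω : V^{s×ℓ} → V^s` sends `x` to `fun i => x i (ω i)`.  The box norm `‖F‖_{□(V^s)}`
is the case `ℓ = 2`. -/
noncomputable def boxNorm (V : Type*) [Fintype V] (s ℓ : ℕ) (F : (Fin s → V) → ℝ) : ℝ :=
  (avg (Fin s → Fin ℓ → V) fun x =>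
      ∏ ω : Fin s → Fin ℓ, F fun i => x i (ω i)) ^ (((ℓ : ℝ) ^ s)⁻¹)

/-- The cut norm `‖F‖_{cut(V^s)}` of `F : V^s → ℝ`; the distinguished element `1^s` of
`[2]^s` is modelled as `fun _ => (0 : Fin 2)`. -/
noncomputable def cutNorm (V : Type*) [Fintype V] (s : ℕ) (F : (Fin s → V) → ℝ) : ℝ :=
  sSup {r : ℝ | ∃ H : (Fin s → Fin 2) → (Fin s → V) → ℝ,
    (∀ ω y, H ω y ∈ Set.Icc (-1 : ℝ) 1) ∧
    r = avg (Fin s → Fin 2 → V) fun x =>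
      F (fun i => x i 0) *
        ∏ ω ∈ Finset.univ.filter (fun ω : Fin s → Fin 2 => ω ≠ fun _ => 0),
          H ω fun i => x i (ω i)}

section AvgLemmas
variable {α β : Type*} [Fintype α] [Fintype β]

lemma avg_nonneg' {f : α → ℝ} (hf : ∀ a, 0 ≤ f a) : 0 ≤ avg α f :=
  div_nonneg (Finset.sum_nonneg fun a _ => hf a) (Nat.cast_nonneg _)

lemma avg_mono {f g : α → ℝ} (h : ∀ a, f a ≤ g a) : avg α f ≤ avg α g := by
  unfold avg
  rw [div_eq_mul_inv, div_eq_mul_inv]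
  exact mul_le_mul_of_nonneg_right (Finset.sum_le_sum fun a _ => h a)
    (inv_nonneg.2 (Nat.cast_nonneg _))

lemma avg_abs_le (f : α → ℝ) : |avg α f| ≤ avg α (fun a => |f a|) := by
  unfold avg
  rw [abs_div, abs_of_nonneg (show (0:ℝ) ≤ (Fintype.card α : ℝ) from Nat.cast_nonneg _),
    div_eq_mul_inv, div_eq_mul_inv]
  exact mul_le_mul_of_nonneg_right (Finset.abs_sum_le_sum_abs _ _)
    (inv_nonneg.2 (Nat.cast_nonneg _))

lemma avg_const [Nonempty α] (c : ℝ) : avg α (fun _ => c) = c := by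
  unfold avg
  rw [Finset.sum_const, Finset.card_univ, nsmul_eq_mul,
    mul_div_cancel_left₀ _ (show ((Fintype.card α : ℝ)) ≠ 0 by exact_mod_cast Fintype.card_ne_zero)]

lemma avg_mul_left (c : ℝ) (f : α → ℝ) : avg α (fun a => c * f a) = c * avg α f := by
  unfold avg; rw [← Finset.mul_sum, mul_div_assoc]

lemma avg_sum {κ : Type*} (S : Finset κ) (h : κ → α → ℝ) :
    avg α (fun a => ∑ t ∈ S, h t a) = ∑ t ∈ S, avg α (h t) := by
  unfold avg; rw [Finset.sum_comm, Finset.sum_div]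

lemma avg_equiv (e : β ≃ α) (f : α → ℝ) : avg α f = avg β (fun b => f (e b)) := by
  unfold avg
  rw [← Equiv.sum_comp e f, ← Fintype.card_congr e]

lemma avg_prod_right (f : α × β → ℝ) :
    avg (α × β) f = avg β (fun b => avg α (fun a => f (a, b))) := by
  simp only [avg]
  rw [Fintype.card_prod, Fintype.sum_prod_type, Nat.cast_mul,
    show (∑ a, ∑ b, f (a, b)) = ∑ b, ∑ a, f (a, b) from Finset.sum_comm,
    ← Finset.sum_div, div_div]

lemma avg_prod_left (f : α × β → ℝ) :
    avg (α × β) f = avg α (fun a => avg β (fun b => f (a, b))) := by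
  simp only [avg]
  rw [Fintype.card_prod, Fintype.sum_prod_type, Nat.cast_mul,
    ← Finset.sum_div, div_div, mul_comm]

lemma avg_pi_prod {ι κ : Type*} [Fintype ι] [DecidableEq ι] [Fintype κ] (h : ι → κ → ℝ) :
    avg (ι → κ) (fun x => ∏ i, h i (x i)) = ∏ i, avg κ (h i) := by
  unfold avg
  rw [Finset.prod_div_distrib, Finset.prod_const, Finset.card_univ,
    Finset.prod_univ_sum, Fintype.piFinset_univ, Fintype.card_fun, Nat.cast_pow]

lemma avg_swap {α β : Type*} [Fintype α] [Fintype β] (F : α → β → ℝ) :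
    avg α (fun a => avg β (fun b => F a b)) = avg β (fun b => avg α (fun a => F a b)) := by
  rw [← avg_prod_left (fun p : α × β => F p.1 p.2), avg_prod_right]

end AvgLemmas


section Hoelder
variable {ι α : Type*} [Fintype ι] [Fintype α]

lemma hoelder_sum [Nonempty ι] (G : ι → α → ℝ) (hG : ∀ i a, 0 ≤ G i a) :
    ∑ a, ∏ i, G i a ≤
      ∏ i, (∑ a, G i a ^ (Fintype.card ι)) ^ ((Fintype.card ι : ℝ))⁻¹ := by
  classical
  set n := Fintype.card ι with hn
  have hn0 : n ≠ 0 := Fintype.card_ne_zero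
  have hTnn : ∀ i, (0:ℝ) ≤ ∑ a, G i a ^ n := fun i =>
    Finset.sum_nonneg fun a _ => pow_nonneg (hG i a) n
  by_cases hT : ∃ i₀, ∑ a, G i₀ a ^ n = 0
  · obtain ⟨i₀, h0⟩ := hT
    have hGz : ∀ a, G i₀ a = 0 := by
      intro a
      have := (Finset.sum_eq_zero_iff_of_nonneg
        (fun a _ => pow_nonneg (hG i₀ a) n)).1 h0 a (Finset.mem_univ a)
      exact pow_eq_zero_iff hn0 |>.1 this
    have hz : ∑ a, ∏ i, G i a = 0 :=
      Finset.sum_eq_zero fun a _ => Finset.prod_eq_zero (Finset.mem_univ i₀) (hGz a)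
    rw [hz]
    exact Finset.prod_nonneg fun i _ => Real.rpow_nonneg (hTnn i) _
  · push_neg at hT
    have hTpos : ∀ i, 0 < ∑ a, G i a ^ n := fun i => (hTnn i).lt_of_ne' (hT i)
    set T : ι → ℝ := fun i => ∑ a, G i a ^ n with hTdef
    have key : ∀ a, ∏ i, G i a ≤
        (∑ i, (n:ℝ)⁻¹ * (G i a ^ n / T i)) * ∏ i, T i ^ ((n:ℝ))⁻¹ := by
      intro a
      have h1 : ∏ i, G i a = (∏ i, (G i a ^ n / T i) ^ ((n:ℝ))⁻¹) * ∏ i, T i ^ ((n:ℝ))⁻¹ := by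
        rw [← Finset.prod_mul_distrib]
        refine Finset.prod_congr rfl fun i _ => ?_
        rw [← Real.mul_rpow (div_nonneg (pow_nonneg (hG i a) n) (hTpos i).le) (le_of_lt (hTpos i)),
          div_mul_cancel₀ _ (ne_of_gt (hTpos i)),
          Real.pow_rpow_inv_natCast (hG i a) hn0]
      rw [h1]
      have h2 : ∏ i, (G i a ^ n / T i) ^ ((n:ℝ))⁻¹ ≤ ∑ i, (n:ℝ)⁻¹ * (G i a ^ n / T i) :=
        Real.geom_mean_le_arith_mean_weighted Finset.univ _ _
          (fun i _ => by positivity)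
          (by
            rw [Finset.sum_const, Finset.card_univ, nsmul_eq_mul, ← hn]
            field_simp)
          (fun i _ => div_nonneg (pow_nonneg (hG i a) n) (hTpos i).le)
      exact mul_le_mul_of_nonneg_right h2
        (Finset.prod_nonneg fun i _ => Real.rpow_nonneg (le_of_lt (hTpos i)) _)
    calc ∑ a, ∏ i, G i a
        ≤ ∑ a, (∑ i, (n:ℝ)⁻¹ * (G i a ^ n / T i)) * ∏ i, T i ^ ((n:ℝ))⁻¹ :=
          Finset.sum_le_sum fun a _ => key a
      _ = (∑ a, ∑ i, (n:ℝ)⁻¹ * (G i a ^ n / T i)) * ∏ i, T i ^ ((n:ℝ))⁻¹ := by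
          rw [← Finset.sum_mul]
      _ = 1 * ∏ i, T i ^ ((n:ℝ))⁻¹ := by
          congr 1
          rw [Finset.sum_comm]
          have hper : ∀ i, ∑ a, (n:ℝ)⁻¹ * (G i a ^ n / T i) = (n:ℝ)⁻¹ := by
            intro i
            rw [← Finset.mul_sum, ← Finset.sum_div, div_self (ne_of_gt (hTpos i)), mul_one]
          rw [Finset.sum_congr rfl fun i _ => hper i, Finset.sum_const, Finset.card_univ,
            nsmul_eq_mul, ← hn, mul_inv_cancel₀ (by exact_mod_cast hn0)]
      _ = ∏ i, T i ^ ((n:ℝ))⁻¹ := one_mul _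

lemma avg_prod_le_prod_avg [Nonempty ι] [Nonempty α] (G : ι → α → ℝ) (hG : ∀ i a, 0 ≤ G i a) :
    avg α (fun a => ∏ i, G i a) ≤
      ∏ i, (avg α (fun a => G i a ^ (Fintype.card ι))) ^ ((Fintype.card ι : ℝ))⁻¹ := by
  classical
  have hc : (0:ℝ) < (Fintype.card α : ℝ) := by exact_mod_cast Fintype.card_pos
  have hn0 : Fintype.card ι ≠ 0 := Fintype.card_ne_zero
  simp only [avg]
  have hrhs : ∏ i, ((∑ a, G i a ^ Fintype.card ι) / (Fintype.card α : ℝ)) ^ ((Fintype.card ι : ℝ))⁻¹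
      = (∏ i, (∑ a, G i a ^ Fintype.card ι) ^ ((Fintype.card ι : ℝ))⁻¹) / (Fintype.card α : ℝ) := by
    have : ∀ i ∈ Finset.univ (α := ι), ((∑ a, G i a ^ Fintype.card ι) / (Fintype.card α : ℝ)) ^ ((Fintype.card ι : ℝ))⁻¹
        = (∑ a, G i a ^ Fintype.card ι) ^ ((Fintype.card ι : ℝ))⁻¹ / ((Fintype.card α : ℝ)) ^ ((Fintype.card ι : ℝ))⁻¹ :=
      fun i _ => Real.div_rpow (Finset.sum_nonneg fun a _ => pow_nonneg (hG i a) _) hc.le _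
    rw [Finset.prod_congr rfl this, Finset.prod_div_distrib, Finset.prod_const, Finset.card_univ,
      Real.rpow_inv_natCast_pow hc.le hn0]
  rw [hrhs, div_eq_mul_inv, div_eq_mul_inv]
  exact mul_le_mul_of_nonneg_right (hoelder_sum G hG) (inv_nonneg.2 hc.le)

lemma abs_avg_prod_le [Nonempty ι] [Nonempty α] (hev : Even (Fintype.card ι)) (G : ι → α → ℝ) :
    |avg α (fun a => ∏ i, G i a)| ≤
      ∏ i, (avg α (fun a => G i a ^ (Fintype.card ι))) ^ ((Fintype.card ι : ℝ))⁻¹ := by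
  calc |avg α fun a => ∏ i, G i a|
      ≤ avg α (fun a => |∏ i, G i a|) := avg_abs_le _
    _ = avg α (fun a => ∏ i, |G i a|) := by
        refine congrArg _ (funext fun a => ?_)
        exact Finset.abs_prod _ _
    _ ≤ ∏ i, (avg α (fun a => |G i a| ^ Fintype.card ι)) ^ ((Fintype.card ι : ℝ))⁻¹ :=
        avg_prod_le_prod_avg _ (fun i a => abs_nonneg _)
    _ = ∏ i, (avg α (fun a => G i a ^ Fintype.card ι)) ^ ((Fintype.card ι : ℝ))⁻¹ := by
        refine Finset.prod_congr rfl fun i _ => ?_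
        congr 1
        exact congrArg _ (funext fun a => hev.pow_abs _)

end Hoelder


noncomputable def Lam (V : Type*) [Fintype V] (s ℓ : ℕ)
    (f : (Fin s → Fin ℓ) → (Fin s → V) → ℝ) : ℝ :=
  avg (Fin s → Fin ℓ → V) fun x => ∏ ω : Fin s → Fin ℓ, f ω fun i => x i (ω i)

noncomputable def Gfun (V : Type*) [Fintype V] (s ℓ : ℕ)
    (f : (Fin (s+1) → Fin ℓ) → (Fin (s+1) → V) → ℝ) (j : Fin ℓ) (x' : Fin s → Fin ℓ → V) : ℝ :=
  avg V fun u => ∏ ω' : Fin s → Fin ℓ, f (Fin.cons j ω') (Fin.cons u fun i => x' i (ω' i))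

variable {V : Type*} [Fintype V]

lemma cons_index_eq (x₀ : Fin ℓ → V) (x' : Fin s → Fin ℓ → V) (j : Fin ℓ)
    (ω' : Fin s → Fin ℓ) :
    (fun i => Fin.cons (α := fun _ => Fin ℓ → V) x₀ x' i (Fin.cons (α := fun _ => Fin ℓ) j ω' i))
      = Fin.cons (α := fun _ => V) (x₀ j) (fun i => x' i (ω' i)) := by
  funext i
  refine Fin.cases ?_ ?_ i
  · simp
  · intro i'
    simp

lemma Lam_succ (s ℓ : ℕ) (f : (Fin (s+1) → Fin ℓ) → (Fin (s+1) → V) → ℝ) :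
    Lam V (s+1) ℓ f = avg (Fin s → Fin ℓ → V) fun x' => ∏ j : Fin ℓ, Gfun V s ℓ f j x' := by
  classical
  unfold Lam
  rw [avg_equiv (Fin.consEquiv (fun _ : Fin (s+1) => Fin ℓ → V)), avg_prod_right]
  refine congrArg _ (funext fun x' => ?_)
  have hce : ∀ x₀ : Fin ℓ → V, (Fin.consEquiv (fun _ : Fin (s+1) => Fin ℓ → V)) (x₀, x') =
      Fin.cons x₀ x' := fun _ => rfl
  have step1 : (fun x₀ : Fin ℓ → V =>
        ∏ ω : Fin (s+1) → Fin ℓ, f ω fun i => (Fin.consEquiv (fun _ : Fin (s+1) => Fin ℓ → V)) (x₀, x') i (ω i))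
      = fun x₀ : Fin ℓ → V => ∏ j : Fin ℓ,
          (fun u => ∏ ω' : Fin s → Fin ℓ, f (Fin.cons j ω') (Fin.cons u fun i => x' i (ω' i))) (x₀ j) := by
    funext x₀
    rw [← Equiv.prod_comp (Fin.consEquiv (fun _ : Fin (s+1) => Fin ℓ))
      (fun ω => f ω fun i => (Fin.consEquiv (fun _ : Fin (s+1) => Fin ℓ → V)) (x₀, x') i (ω i)),
      Fintype.prod_prod_type]
    refine Finset.prod_congr rfl fun j _ => Finset.prod_congr rfl fun ω' _ => ?_
    rw [hce]
    exact congrArg _ (cons_index_eq x₀ x' j ω')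
  rw [step1]
  exact avg_pi_prod
    (fun j u => ∏ ω' : Fin s → Fin ℓ, f (Fin.cons j ω') (Fin.cons u fun i => x' i (ω' i)))

lemma Lam_tail (s ℓ : ℕ) (f : (Fin (s+1) → Fin ℓ) → (Fin (s+1) → V) → ℝ) (j : Fin ℓ) :
    Lam V (s+1) ℓ (fun ω => f (Fin.cons j (Fin.tail ω))) =
      avg (Fin s → Fin ℓ → V) fun x' => (Gfun V s ℓ f j x') ^ ℓ := by
  rw [Lam_succ]
  refine congrArg _ (funext fun x' => ?_)
  have hG : ∀ k : Fin ℓ, Gfun V s ℓ (fun ω => f (Fin.cons j (Fin.tail ω))) k x'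
      = Gfun V s ℓ f j x' := by
    intro k
    unfold Gfun
    simp only [Fin.tail_cons]
  rw [Finset.prod_congr rfl fun k _ => hG k, Finset.prod_const, Finset.card_univ,
    Fintype.card_fin]

lemma Lam_tail_avg (s ℓ : ℕ) (f : (Fin (s+1) → Fin ℓ) → (Fin (s+1) → V) → ℝ) (j : Fin ℓ) :
    Lam V (s+1) ℓ (fun ω => f (Fin.cons j (Fin.tail ω))) =
      avg (Fin ℓ → V) fun x₀ =>
        Lam V s ℓ (fun ω' y' => ∏ k : Fin ℓ, f (Fin.cons j ω') (Fin.cons (x₀ k) y')) := by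
  classical
  rw [Lam_tail]
  conv_rhs => rw [show (fun x₀ : Fin ℓ → V =>
    Lam V s ℓ (fun ω' y' => ∏ k : Fin ℓ, f (Fin.cons j ω') (Fin.cons (x₀ k) y')))
    = fun x₀ : Fin ℓ → V => avg (Fin s → Fin ℓ → V) (fun x' =>
        ∏ ω' : Fin s → Fin ℓ, ∏ k : Fin ℓ, f (Fin.cons j ω') (Fin.cons (x₀ k) fun i => x' i (ω' i)))
    from funext fun x₀ => rfl]
  rw [avg_swap]
  refine congrArg _ (funext fun x' => ?_)
  have hsw : (fun x₀ : Fin ℓ → V =>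
      ∏ ω' : Fin s → Fin ℓ, ∏ k : Fin ℓ, f (Fin.cons j ω') (Fin.cons (x₀ k) fun i => x' i (ω' i)))
      = fun x₀ : Fin ℓ → V => ∏ k : Fin ℓ,
          (fun u => ∏ ω' : Fin s → Fin ℓ, f (Fin.cons j ω') (Fin.cons u fun i => x' i (ω' i))) (x₀ k) :=
    funext fun x₀ => Finset.prod_comm
  show Gfun V s ℓ f j x' ^ ℓ = avg (Fin ℓ → V) (fun x₀ : Fin ℓ → V =>
      ∏ ω' : Fin s → Fin ℓ, ∏ k : Fin ℓ, f (Fin.cons j ω') (Fin.cons (x₀ k) fun i => x' i (ω' i)))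
  rw [hsw]
  have h3 := avg_pi_prod (ι := Fin ℓ) (κ := V)
    (fun _ u => ∏ ω' : Fin s → Fin ℓ, f (Fin.cons j ω') (Fin.cons u fun i => x' i (ω' i)))
  have h4 : (∏ _k : Fin ℓ, Gfun V s ℓ f j x') = Gfun V s ℓ f j x' ^ ℓ := by
    rw [Finset.prod_const, Finset.card_univ, Fintype.card_fin]
  exact (h3.trans h4).symm

lemma Lam_const_nonneg (s ℓ : ℕ) (hs : 1 ≤ s) (hev : Even ℓ) (g : (Fin s → V) → ℝ) :
    0 ≤ Lam V s ℓ (fun _ => g) := by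
  obtain ⟨s', rfl⟩ : ∃ s', s = s' + 1 := ⟨s - 1, by omega⟩
  rw [Lam_succ]
  refine avg_nonneg' fun x' => ?_
  show 0 ≤ ∏ j : Fin ℓ, Gfun V s' ℓ (fun _ => g) j x'
  have hconst : ∀ j : Fin ℓ, Gfun V s' ℓ (fun _ => g) j x'
      = avg V fun u => ∏ ω' : Fin s' → Fin ℓ, g (Fin.cons u fun i => x' i (ω' i)) := fun _ => rfl
  rw [Finset.prod_congr rfl fun j _ => hconst j, Finset.prod_const, Finset.card_univ,
    Fintype.card_fin]
  exact hev.pow_nonneg _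


variable {V : Type*} [Fintype V] [Nonempty V]

lemma step_hoelder (s ℓ : ℕ) (hl2 : 2 ≤ ℓ) (hev : Even ℓ)
    (f : (Fin (s+1) → Fin ℓ) → (Fin (s+1) → V) → ℝ) :
    |Lam V (s+1) ℓ f| ≤
      ∏ j : Fin ℓ, (Lam V (s+1) ℓ fun ω => f (Fin.cons j (Fin.tail ω))) ^ ((ℓ:ℝ))⁻¹ := by
  haveI : Nonempty (Fin ℓ) := ⟨⟨0, by omega⟩⟩
  rw [Lam_succ]
  calc |avg (Fin s → Fin ℓ → V) fun x' => ∏ j : Fin ℓ, Gfun V s ℓ f j x'|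
      ≤ ∏ j : Fin ℓ, (avg (Fin s → Fin ℓ → V)
          (fun x' => (Gfun V s ℓ f j x') ^ (Fintype.card (Fin ℓ)))) ^ ((Fintype.card (Fin ℓ) : ℝ))⁻¹ :=
        abs_avg_prod_le (by rw [Fintype.card_fin]; exact hev) _
    _ = ∏ j : Fin ℓ, (Lam V (s+1) ℓ fun ω => f (Fin.cons j (Fin.tail ω))) ^ ((ℓ:ℝ))⁻¹ := by
        refine Finset.prod_congr rfl fun j _ => ?_
        rw [Fintype.card_fin, ← Lam_tail]

lemma gcs (s ℓ : ℕ) (hs : 1 ≤ s) (hl2 : 2 ≤ ℓ) (hev : Even ℓ)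
    (f : (Fin s → Fin ℓ) → (Fin s → V) → ℝ) :
    |Lam V s ℓ f| ≤ ∏ ω : Fin s → Fin ℓ, (Lam V s ℓ fun _ => f ω) ^ (((ℓ:ℝ) ^ s)⁻¹) := by
  haveI : Nonempty (Fin ℓ) := ⟨⟨0, by omega⟩⟩
  induction s, hs using Nat.le_induction with
  | base =>
    calc |Lam V 1 ℓ f|
        ≤ ∏ j : Fin ℓ, (Lam V 1 ℓ fun ω => f (Fin.cons j (Fin.tail ω))) ^ ((ℓ:ℝ))⁻¹ :=
          step_hoelder 0 ℓ hl2 hev f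
      _ = ∏ ω : Fin 1 → Fin ℓ, (Lam V 1 ℓ fun _ => f ω) ^ (((ℓ:ℝ) ^ 1)⁻¹) := by
          rw [← Equiv.prod_comp (Equiv.funUnique (Fin 1) (Fin ℓ)).symm
            (fun ω => (Lam V 1 ℓ fun _ => f ω) ^ (((ℓ:ℝ) ^ 1)⁻¹))]
          refine Finset.prod_congr rfl fun j _ => ?_
          rw [pow_one]
          refine congrArg (· ^ ((ℓ:ℝ))⁻¹) (congrArg (Lam V 1 ℓ)
            (funext fun ω => congrArg f (funext fun i => ?_)))
          refine Fin.cases ?_ (fun i' => i'.elim0) i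
          simp [Equiv.funUnique]
  | succ s hs ih =>
    have hσ : (0:ℝ) ≤ ((ℓ:ℝ)^s)⁻¹ := by positivity
    have htail_nn : ∀ g : (Fin (s+1) → Fin ℓ) → (Fin (s+1) → V) → ℝ, ∀ j : Fin ℓ,
        0 ≤ Lam V (s+1) ℓ (fun ω => g (Fin.cons j (Fin.tail ω))) := by
      intro g j
      rw [Lam_tail]
      exact avg_nonneg' fun x' => hev.pow_nonneg _
    have claim : ∀ j : Fin ℓ, Lam V (s+1) ℓ (fun ω => f (Fin.cons j (Fin.tail ω)))
        ≤ ∏ ω' : Fin s → Fin ℓ,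
            (Lam V (s+1) ℓ fun _ => f (Fin.cons j ω')) ^ (((ℓ:ℝ)^s)⁻¹) := by
      intro j
      rw [Lam_tail_avg]
      have st1 : avg (Fin ℓ → V) (fun x₀ => Lam V s ℓ
            (fun ω' y' => ∏ k : Fin ℓ, f (Fin.cons j ω') (Fin.cons (x₀ k) y')))
          ≤ avg (Fin ℓ → V) (fun x₀ => ∏ ω' : Fin s → Fin ℓ,
              (Lam V s ℓ fun _ y' => ∏ k : Fin ℓ, f (Fin.cons j ω') (Fin.cons (x₀ k) y'))
                ^ (((ℓ:ℝ)^s)⁻¹)) :=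
        avg_mono fun x₀ => (le_abs_self _).trans (ih _)
      refine st1.trans ?_
      have hold := avg_prod_le_prod_avg (ι := Fin s → Fin ℓ) (α := Fin ℓ → V)
        (fun ω' x₀ => (Lam V s ℓ fun _ y' => ∏ k : Fin ℓ,
            f (Fin.cons j ω') (Fin.cons (x₀ k) y')) ^ (((ℓ:ℝ)^s)⁻¹))
        (fun ω' x₀ => Real.rpow_nonneg (Lam_const_nonneg s ℓ (by omega) hev _) _)
      refine hold.trans (le_of_eq ?_)
      refine Finset.prod_congr rfl fun ω' _ => ?_
      have hcard : Fintype.card ((Fin s) → Fin ℓ) = ℓ ^ s := by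
        rw [Fintype.card_fun, Fintype.card_fin, Fintype.card_fin]
      have hXnn : ∀ x₀ : Fin ℓ → V, 0 ≤ Lam V s ℓ
          (fun _ y' => ∏ k : Fin ℓ, f (Fin.cons j ω') (Fin.cons (x₀ k) y')) :=
        fun x₀ => Lam_const_nonneg s ℓ (by omega) hev _
      have hpow : (fun x₀ : Fin ℓ → V =>
            ((Lam V s ℓ fun _ y' => ∏ k : Fin ℓ, f (Fin.cons j ω') (Fin.cons (x₀ k) y'))
              ^ (((ℓ:ℝ)^s)⁻¹)) ^ (Fintype.card ((Fin s) → Fin ℓ)))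
          = fun x₀ : Fin ℓ → V => Lam V s ℓ
              (fun _ y' => ∏ k : Fin ℓ, f (Fin.cons j ω') (Fin.cons (x₀ k) y')) := by
        funext x₀
        rw [hcard, show ((ℓ:ℝ)^s) = ((ℓ^s : ℕ) : ℝ) by push_cast; ring,
          Real.rpow_inv_natCast_pow (hXnn x₀) (by positivity)]
      have hfin : avg (Fin ℓ → V) (fun x₀ => Lam V s ℓ
            (fun _ y' => ∏ k : Fin ℓ, f (Fin.cons j ω') (Fin.cons (x₀ k) y')))
          = Lam V (s+1) ℓ (fun _ => f (Fin.cons j ω')) :=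
        (Lam_tail_avg s ℓ (fun _ => f (Fin.cons j ω')) j).symm
      show (avg (Fin ℓ → V) fun x₀ =>
          ((Lam V s ℓ fun _ y' => ∏ k : Fin ℓ, f (Fin.cons j ω') (Fin.cons (x₀ k) y'))
            ^ (((ℓ:ℝ)^s)⁻¹)) ^ (Fintype.card ((Fin s) → Fin ℓ)))
          ^ ((Fintype.card ((Fin s) → Fin ℓ) : ℝ))⁻¹
        = (Lam V (s+1) ℓ fun _ => f (Fin.cons j ω')) ^ (((ℓ:ℝ)^s)⁻¹)
      rw [hpow, hfin, hcard, show ((ℓ^s : ℕ) : ℝ) = ((ℓ:ℝ)^s) by push_cast; ring]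
    calc |Lam V (s+1) ℓ f|
        ≤ ∏ j : Fin ℓ, (Lam V (s+1) ℓ fun ω => f (Fin.cons j (Fin.tail ω))) ^ ((ℓ:ℝ))⁻¹ :=
          step_hoelder s ℓ hl2 hev f
      _ ≤ ∏ j : Fin ℓ, (∏ ω' : Fin s → Fin ℓ,
            (Lam V (s+1) ℓ fun _ => f (Fin.cons j ω')) ^ (((ℓ:ℝ)^s)⁻¹)) ^ ((ℓ:ℝ))⁻¹ := by
          refine Finset.prod_le_prod (fun j _ => Real.rpow_nonneg (htail_nn f j) _)
            (fun j _ => Real.rpow_le_rpow (htail_nn f j) (claim j) (by positivity))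
      _ = ∏ j : Fin ℓ, ∏ ω' : Fin s → Fin ℓ,
            (Lam V (s+1) ℓ fun _ => f (Fin.cons j ω')) ^ (((ℓ:ℝ)^(s+1))⁻¹) := by
          refine Finset.prod_congr rfl fun j _ => ?_
          rw [← Real.finset_prod_rpow _ _
            (fun ω' _ => Real.rpow_nonneg (Lam_const_nonneg (s+1) ℓ (by omega) hev _) _) _]
          refine Finset.prod_congr rfl fun ω' _ => ?_
          rw [← Real.rpow_mul (Lam_const_nonneg (s+1) ℓ (by omega) hev _)]
          congr 1
          rw [pow_succ, mul_inv]
      _ = ∏ ω : Fin (s+1) → Fin ℓ, (Lam V (s+1) ℓ fun _ => f ω) ^ (((ℓ:ℝ)^(s+1))⁻¹) := by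
          rw [← Equiv.prod_comp (Fin.consEquiv fun _ : Fin (s+1) => Fin ℓ)
            (fun ω => (Lam V (s+1) ℓ fun _ => f ω) ^ (((ℓ:ℝ)^(s+1))⁻¹)),
            Fintype.prod_prod_type]
          rfl


section Assemble
variable {V : Type*} [Fintype V] [Nonempty V]

set_option linter.unusedSectionVars false

lemma boxNorm_eq (s ℓ : ℕ) (F : (Fin s → V) → ℝ) :
    boxNorm V s ℓ F = (Lam V s ℓ (fun _ => F)) ^ (((ℓ:ℝ)^s)⁻¹) := rfl

lemma hcard_fun (s ℓ : ℕ) : Fintype.card (Fin s → Fin ℓ) = ℓ ^ s := by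
  rw [Fintype.card_fun, Fintype.card_fin, Fintype.card_fin]

lemma boxNorm_nonneg (s ℓ : ℕ) (hs : 1 ≤ s) (hev : Even ℓ) (F : (Fin s → V) → ℝ) :
    0 ≤ boxNorm V s ℓ F :=
  Real.rpow_nonneg (Lam_const_nonneg s ℓ hs hev F) _

lemma rpow_pow_inv (s ℓ : ℕ) (hl2 : 2 ≤ ℓ) {a : ℝ} (ha : 0 ≤ a) :
    (a ^ (ℓ ^ s : ℕ)) ^ (((ℓ:ℝ)^s)⁻¹) = a := by
  rw [← Real.rpow_natCast a (ℓ ^ s), ← Real.rpow_mul ha,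
    show (((ℓ ^ s : ℕ) : ℝ)) = ((ℓ:ℝ)^s) by push_cast; ring,
    mul_inv_cancel₀ (by positivity), Real.rpow_one]

lemma box_smul (s ℓ : ℕ) (hs : 1 ≤ s) (hl2 : 2 ≤ ℓ) (hev : Even ℓ) (c : ℝ)
    (F : (Fin s → V) → ℝ) :
    boxNorm V s ℓ (fun x => c * F x) = |c| * boxNorm V s ℓ F := by
  have hNev : Even (ℓ ^ s) := hev.pow_of_ne_zero (by omega)
  have hA : 0 ≤ Lam V s ℓ (fun _ => F) := Lam_const_nonneg s ℓ hs hev F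
  have hLam : Lam V s ℓ (fun _ => fun x => c * F x)
      = |c| ^ (ℓ ^ s : ℕ) * Lam V s ℓ (fun _ => F) := by
    unfold Lam
    rw [← avg_mul_left]
    refine congrArg _ (funext fun x => ?_)
    show (∏ ω : Fin s → Fin ℓ, c * F fun i => x i (ω i))
        = |c| ^ (ℓ ^ s : ℕ) * ∏ ω : Fin s → Fin ℓ, F fun i => x i (ω i)
    rw [Finset.prod_mul_distrib, Finset.prod_const, Finset.card_univ, hcard_fun,
      ← hNev.pow_abs]
  rw [boxNorm_eq, boxNorm_eq, hLam,
    Real.mul_rpow (pow_nonneg (abs_nonneg c) _) hA, rpow_pow_inv s ℓ hl2 (abs_nonneg c)]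

lemma box_triangle (s ℓ : ℕ) (hs : 1 ≤ s) (hl2 : 2 ≤ ℓ) (hev : Even ℓ)
    (F G : (Fin s → V) → ℝ) :
    boxNorm V s ℓ (fun x => F x + G x) ≤ boxNorm V s ℓ F + boxNorm V s ℓ G := by
  classical
  have hexp : Lam V s ℓ (fun _ => fun x => F x + G x)
      = ∑ T ∈ (univ : Finset (Fin s → Fin ℓ)).powerset,
          Lam V s ℓ (fun ω => if ω ∈ T then F else G) := by
    unfold Lam
    rw [← avg_sum]
    refine congrArg _ (funext fun x => ?_)
    show (∏ ω : Fin s → Fin ℓ, (F (fun i => x i (ω i)) + G (fun i => x i (ω i))))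
        = ∑ T ∈ (univ : Finset (Fin s → Fin ℓ)).powerset,
            ∏ ω : Fin s → Fin ℓ, (if ω ∈ T then F else G) (fun i => x i (ω i))
    have hT2 : ∀ T : Finset (Fin s → Fin ℓ),
        (∏ ω : Fin s → Fin ℓ, (if ω ∈ T then F else G) fun i => x i (ω i))
        = (∏ ω ∈ T, F fun i => x i (ω i)) * ∏ ω ∈ univ \ T, G fun i => x i (ω i) := by
      intro T
      calc (∏ ω : Fin s → Fin ℓ, (if ω ∈ T then F else G) fun i => x i (ω i))
          = ∏ ω : Fin s → Fin ℓ,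
              (if ω ∈ T then F (fun i => x i (ω i)) else G (fun i => x i (ω i))) :=
            Finset.prod_congr rfl fun ω _ => apply_ite (fun h => h fun i => x i (ω i)) _ F G
        _ = _ := by
            rw [Finset.prod_ite, Finset.filter_mem_eq_inter, Finset.univ_inter,
              ← Finset.sdiff_eq_filter]
    rw [Finset.prod_add]
    exact (Finset.sum_congr rfl fun T _ => hT2 T).symm
  have hboxF : 0 ≤ boxNorm V s ℓ F := boxNorm_nonneg s ℓ hs hev F
  have hboxG : 0 ≤ boxNorm V s ℓ G := boxNorm_nonneg s ℓ hs hev G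
  have hmain : Lam V s ℓ (fun _ => fun x => F x + G x)
      ≤ (boxNorm V s ℓ F + boxNorm V s ℓ G) ^ (ℓ ^ s : ℕ) := by
    rw [hexp]
    have h1 : ∀ T ∈ (univ : Finset (Fin s → Fin ℓ)).powerset,
        Lam V s ℓ (fun ω => if ω ∈ T then F else G)
        ≤ (boxNorm V s ℓ F) ^ T.card * (boxNorm V s ℓ G) ^ ((univ : Finset (Fin s → Fin ℓ)) \ T).card := by
      intro T _
      refine (le_abs_self _).trans ((gcs s ℓ hs hl2 hev _).trans (le_of_eq ?_))
      calc (∏ ω : Fin s → Fin ℓ, (Lam V s ℓ fun _ => if ω ∈ T then F else G) ^ (((ℓ:ℝ)^s)⁻¹))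
          = ∏ ω : Fin s → Fin ℓ, (if ω ∈ T then boxNorm V s ℓ F else boxNorm V s ℓ G) := by
            refine Finset.prod_congr rfl fun ω _ => ?_
            by_cases hω : ω ∈ T
            · rw [if_pos hω, if_pos hω]
              rfl
            · rw [if_neg hω, if_neg hω]
              rfl
        _ = (boxNorm V s ℓ F) ^ T.card * (boxNorm V s ℓ G) ^ ((univ : Finset (Fin s → Fin ℓ)) \ T).card := by
            rw [Finset.prod_ite, Finset.prod_const, Finset.prod_const,
              Finset.filter_mem_eq_inter, Finset.univ_inter, ← Finset.sdiff_eq_filter]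
    refine (Finset.sum_le_sum h1).trans (le_of_eq ?_)
    have hpa := Finset.prod_add (fun _ : Fin s → Fin ℓ => boxNorm V s ℓ F)
      (fun _ : Fin s → Fin ℓ => boxNorm V s ℓ G) univ
    simp only [Finset.prod_const] at hpa
    rw [← hpa, Finset.card_univ, hcard_fun]
  rw [boxNorm_eq]
  calc (Lam V s ℓ (fun _ => fun x => F x + G x)) ^ (((ℓ:ℝ)^s)⁻¹)
      ≤ ((boxNorm V s ℓ F + boxNorm V s ℓ G) ^ (ℓ ^ s : ℕ)) ^ (((ℓ:ℝ)^s)⁻¹) :=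
        Real.rpow_le_rpow (Lam_const_nonneg s ℓ hs hev _) hmain (by positivity)
    _ = boxNorm V s ℓ F + boxNorm V s ℓ G :=
        rpow_pow_inv s ℓ hl2 (add_nonneg hboxF hboxG)

end Assemble


section Assemble2
variable {V : Type*} [Fintype V] [Nonempty V]

set_option linter.unusedSectionVars false

lemma box_zero_iff (s ℓ : ℕ) (hs : 2 ≤ s) (hl2 : 2 ≤ ℓ) (hev : Even ℓ)
    (F : (Fin s → V) → ℝ) :
    boxNorm V s ℓ F = 0 ↔ F = fun _ => 0 := by
  classical
  have hσ : (((ℓ:ℝ)^s)⁻¹) ≠ 0 := by positivity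
  constructor
  · intro h0
    have hA : Lam V s ℓ (fun _ => F) = 0 := by
      by_contra hne
      have hpos : 0 < Lam V s ℓ (fun _ => F) :=
        lt_of_le_of_ne (Lam_const_nonneg s ℓ (by omega) hev F) (Ne.symm hne)
      have := Real.rpow_pos_of_pos hpos (((ℓ:ℝ)^s)⁻¹)
      rw [boxNorm_eq] at h0
      linarith
    funext y₀
    show F y₀ = 0
    set z : Fin ℓ := ⟨0, by omega⟩ with hz
    set ω₀ : Fin s → Fin ℓ := fun _ => z with hω₀
    set δ : (Fin s → V) → ℝ := fun y => if y = y₀ then 1 else 0 with hδ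
    set f : (Fin s → Fin ℓ) → (Fin s → V) → ℝ := fun ω => if ω = ω₀ then F else δ with hfdef
    have hgcs := gcs s ℓ (by omega) hl2 hev f
    have hR : (∏ ω : Fin s → Fin ℓ, (Lam V s ℓ fun _ => f ω) ^ (((ℓ:ℝ)^s)⁻¹)) = 0 := by
      refine Finset.prod_eq_zero (Finset.mem_univ ω₀) ?_
      have : f ω₀ = F := by rw [hfdef]; simp
      rw [this, ← boxNorm_eq, h0]

    have hzero : Lam V s ℓ f = 0 := by
      have h1 := hgcs.trans (le_of_eq hR)
      exact abs_eq_zero.1 (le_antisymm h1 (abs_nonneg _))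
    set X₀ : Fin s → Fin ℓ → V := fun i _ => y₀ i with hX₀
    have hpoint : ∀ x : Fin s → Fin ℓ → V,
        (∏ ω : Fin s → Fin ℓ, f ω fun i => x i (ω i))
          = if x = X₀ then F y₀ else 0 := by
      intro x
      by_cases hx : x = X₀
      · subst hx
        rw [if_pos rfl]
        have h2 : ∀ ω : Fin s → Fin ℓ, ω ≠ ω₀ → (f ω fun i => X₀ i (ω i)) = 1 := by
          intro ω hω
          rw [hfdef]
          simp only [if_neg hω, hδ]
          simp [hX₀]
        rw [Finset.prod_eq_single ω₀ (fun ω _ hω => h2 ω hω)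
          (fun h => absurd (Finset.mem_univ ω₀) h)]
        rw [hfdef]
        simp [hX₀]
      · rw [if_neg hx]
        have hex : ∃ i j, X₀ i j ≠ x i j := by
          by_contra hc
          push_neg at hc
          exact hx (funext fun i => funext fun j => (hc i j).symm)
        obtain ⟨i, j, hij⟩ := hex
        have hij' : x i j ≠ y₀ i := fun h => hij (h.symm)
        have hω' : ∃ ω' : Fin s → Fin ℓ, ω' ≠ ω₀ ∧ ω' i = j := by
          by_cases hj : j = z
          · obtain ⟨i', hii'⟩ : ∃ i' : Fin s, i' ≠ i := by
              by_cases h0 : i = ⟨0, by omega⟩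
              · subst h0
                exact ⟨⟨1, by omega⟩, by simp [Fin.ext_iff]⟩
              · exact ⟨⟨0, by omega⟩, fun h => h0 h.symm⟩
            refine ⟨Function.update ω₀ i' ⟨1, by omega⟩, ?_, ?_⟩
            · intro h
              have h5 := congrFun h i'
              rw [Function.update_self, hω₀] at h5
              have h6 := congrArg Fin.val h5
              simp [hz] at h6
            · rw [Function.update_of_ne (Ne.symm hii') _ _, hω₀, hj]
          · refine ⟨Function.update ω₀ i j, ?_, Function.update_self _ _ _⟩
            intro h
            have := congrFun h i
            rw [Function.update_self, hω₀] at this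
            exact hj this
        obtain ⟨ω', hω'ne, hω'i⟩ := hω'
        refine Finset.prod_eq_zero (Finset.mem_univ ω') ?_
        rw [hfdef]
        simp only [if_neg hω'ne, hδ]
        rw [if_neg]
        intro h
        have := congrFun h i
        rw [hω'i] at this
        exact hij' this
    have hcomp : Lam V s ℓ f = F y₀ / (Fintype.card (Fin s → Fin ℓ → V) : ℝ) := by
      unfold Lam avg
      rw [Finset.sum_congr rfl fun x _ => hpoint x]
      rw [Finset.sum_ite_eq' Finset.univ X₀ (fun _ => F y₀)]
      rw [if_pos (Finset.mem_univ X₀)]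
    rw [hzero] at hcomp
    have hcpos : (0:ℝ) < (Fintype.card (Fin s → Fin ℓ → V) : ℝ) := by
      exact_mod_cast Fintype.card_pos
    field_simp at hcomp
    simpa using hcomp.symm
  · intro h
    subst h
    rw [boxNorm_eq]
    have hne : Nonempty (Fin s → Fin ℓ) := ⟨fun _ => ⟨0, by omega⟩⟩
    have : Lam V s ℓ (fun _ => fun _ => (0:ℝ)) = 0 := by
      unfold Lam
      have : ∀ x : Fin s → Fin ℓ → V,
          (∏ ω : Fin s → Fin ℓ, (fun _ => fun _ => (0:ℝ)) ω fun i => x i (ω i)) = 0 :=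
        fun x => Finset.prod_eq_zero (Finset.mem_univ (Classical.arbitrary _)) rfl
      rw [funext this, avg_const]
    rw [this, Real.zero_rpow hσ]

end Assemble2


section Assemble3
variable {V : Type*} [Fintype V] [Nonempty V]

set_option linter.unusedSectionVars false

def restrictEquiv (V : Type*) (s k₁ k₂ : ℕ) (h : k₁ ≤ k₂) :
    (Fin s → Fin k₂ → V) ≃ ((Fin s → Fin k₁ → V) × (Fin s → Fin (k₂ - k₁) → V)) where
  toFun x := (fun i j => x i (Fin.castLE h j), fun i j => x i ⟨k₁ + j.1, by omega⟩)
  invFun p i j := if hj : j.1 < k₁ then p.1 i ⟨j.1, hj⟩ else p.2 i ⟨j.1 - k₁, by omega⟩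
  left_inv x := by
    funext i j
    dsimp only
    split
    · rfl
    · exact congrArg _ (Fin.ext (show k₁ + (j.1 - k₁) = j.1 by omega))
  right_inv p := by
    refine Prod.ext ?_ ?_ <;> funext i j <;> dsimp only
    · split
      · exact congrArg _ (Fin.ext rfl)
      · next hj => exact absurd j.2 hj
    · split
      · next hj => exact absurd hj (by omega)
      · exact congrArg _ (Fin.ext (show k₁ + j.1 - k₁ = j.1 by omega))
  
lemma avg_restrict (s k₁ k₂ : ℕ) (h : k₁ ≤ k₂) (g : (Fin s → Fin k₁ → V) → ℝ) :
    avg (Fin s → Fin k₂ → V) (fun x => g (fun i j => x i (Fin.castLE h j)))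
      = avg (Fin s → Fin k₁ → V) g := by
  rw [avg_equiv (restrictEquiv V s k₁ k₂ h).symm
    (fun x => g (fun i j => x i (Fin.castLE h j)))]
  have hp : ∀ p : (Fin s → Fin k₁ → V) × (Fin s → Fin (k₂ - k₁) → V),
      (fun i j => ((restrictEquiv V s k₁ k₂ h).symm p) i (Fin.castLE h j)) = p.1 := by
    intro p
    funext i j
    simp only [restrictEquiv, Equiv.coe_fn_symm_mk, Fin.coe_castLE]
    rw [dif_pos j.isLt]
  rw [show (fun p : (Fin s → Fin k₁ → V) × (Fin s → Fin (k₂ - k₁) → V) =>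
      g fun i j => ((restrictEquiv V s k₁ k₂ h).symm p) i (Fin.castLE h j))
    = fun p : (Fin s → Fin k₁ → V) × (Fin s → Fin (k₂ - k₁) → V) => g p.1 from
      funext fun p => congrArg g (hp p)]
  rw [avg_prod_left]
  exact congrArg _ (funext fun a => avg_const (g a))

lemma box_mono (s ℓ₁ ℓ₂ : ℕ) (hs : 2 ≤ s) (h1 : 2 ≤ ℓ₁) (h12 : ℓ₁ ≤ ℓ₂)
    (he1 : Even ℓ₁) (he2 : Even ℓ₂) (F : (Fin s → V) → ℝ) :
    boxNorm V s ℓ₁ F ≤ boxNorm V s ℓ₂ F := by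
  classical
  set E : (Fin s → Fin ℓ₁) → (Fin s → Fin ℓ₂) := fun ω i => Fin.castLE h12 (ω i) with hE
  have hEinj : Function.Injective E := by
    intro a b hab
    funext i
    exact Fin.castLE_injective h12 (congrFun hab i)
  set f : (Fin s → Fin ℓ₂) → (Fin s → V) → ℝ :=
    fun ω' => if ∃ ω, E ω = ω' then F else fun _ => (1:ℝ) with hfdef
  have hfilter : (univ : Finset (Fin s → Fin ℓ₂)).filter (fun ω' => ∃ ω, E ω = ω')
      = Finset.image E univ := by
    ext ω'
    simp [Finset.mem_image]
  have hmarg : Lam V s ℓ₂ f = Lam V s ℓ₁ (fun _ => F) := by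
    unfold Lam
    have hpoint : ∀ x : Fin s → Fin ℓ₂ → V,
        (∏ ω' : Fin s → Fin ℓ₂, f ω' fun i => x i (ω' i))
        = ∏ ω : Fin s → Fin ℓ₁, F fun i => x i (Fin.castLE h12 (ω i)) := by
      intro x
      calc (∏ ω' : Fin s → Fin ℓ₂, f ω' fun i => x i (ω' i))
          = ∏ ω' : Fin s → Fin ℓ₂, (if ∃ ω, E ω = ω' then F (fun i => x i (ω' i)) else 1) := by
            refine Finset.prod_congr rfl fun ω' _ => ?_
            exact apply_ite (fun h : (Fin s → V) → ℝ => h fun i => x i (ω' i))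
              (∃ ω, E ω = ω') F (fun _ => (1:ℝ))
        _ = ∏ ω' ∈ (univ : Finset (Fin s → Fin ℓ₂)).filter (fun ω' => ∃ ω, E ω = ω'),
              F fun i => x i (ω' i) := (Finset.prod_filter _ _).symm
        _ = ∏ ω' ∈ Finset.image E univ, F fun i => x i (ω' i) := by rw [hfilter]
        _ = ∏ ω : Fin s → Fin ℓ₁, F fun i => x i (E ω i) :=
            Finset.prod_image fun a _ b _ hab => hEinj hab
        _ = ∏ ω : Fin s → Fin ℓ₁, F fun i => x i (Fin.castLE h12 (ω i)) := rfl
    calc (avg (Fin s → Fin ℓ₂ → V) fun x => ∏ ω' : Fin s → Fin ℓ₂, f ω' fun i => x i (ω' i))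
        = avg (Fin s → Fin ℓ₂ → V) fun x =>
            ∏ ω : Fin s → Fin ℓ₁, F fun i => x i (Fin.castLE h12 (ω i)) :=
          congrArg _ (funext hpoint)
      _ = avg (Fin s → Fin ℓ₁ → V) fun y => ∏ ω : Fin s → Fin ℓ₁, F fun i => y i (ω i) :=
          avg_restrict s ℓ₁ ℓ₂ h12 (fun y => ∏ ω : Fin s → Fin ℓ₁, F fun i => y i (ω i))
  have hone : Lam V s ℓ₂ (fun _ => fun _ => (1:ℝ)) = 1 := by
    unfold Lam
    have hpt : ∀ x : Fin s → Fin ℓ₂ → V,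
        (∏ _ω : Fin s → Fin ℓ₂, (1:ℝ)) = 1 := fun x => Finset.prod_const_one
    rw [show (fun x : Fin s → Fin ℓ₂ → V =>
      ∏ ω : Fin s → Fin ℓ₂, (fun _ => fun _ => (1:ℝ)) ω fun i => x i (ω i))
      = fun _ : Fin s → Fin ℓ₂ → V => (1:ℝ) from funext fun x => hpt x, avg_const]
  have hgcs := gcs s ℓ₂ (by omega) (by omega) he2 f
  have hprod : (∏ ω' : Fin s → Fin ℓ₂, (Lam V s ℓ₂ fun _ => f ω') ^ (((ℓ₂:ℝ)^s)⁻¹))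
      = (boxNorm V s ℓ₂ F) ^ (ℓ₁ ^ s : ℕ) := by
    calc (∏ ω' : Fin s → Fin ℓ₂, (Lam V s ℓ₂ fun _ => f ω') ^ (((ℓ₂:ℝ)^s)⁻¹))
        = ∏ ω' : Fin s → Fin ℓ₂,
            (if ∃ ω, E ω = ω' then boxNorm V s ℓ₂ F else 1) := by
          refine Finset.prod_congr rfl fun ω' _ => ?_
          by_cases hP : ∃ ω, E ω = ω'
          · have hfω : f ω' = F := if_pos hP
            rw [hfω, if_pos hP]
            rfl
          · have hfω : f ω' = (fun _ => (1:ℝ)) := if_neg hP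
            rw [hfω, if_neg hP, hone, Real.one_rpow]
      _ = (boxNorm V s ℓ₂ F) ^ ((univ : Finset (Fin s → Fin ℓ₂)).filter (fun ω' => ∃ ω, E ω = ω')).card := by
          rw [Finset.prod_ite, Finset.prod_const, Finset.prod_const, one_pow, mul_one]
      _ = (boxNorm V s ℓ₂ F) ^ (ℓ₁ ^ s : ℕ) := by
          rw [hfilter, Finset.card_image_of_injective _ hEinj, Finset.card_univ, hcard_fun]
  have hL1nn : 0 ≤ Lam V s ℓ₁ (fun _ => F) := Lam_const_nonneg s ℓ₁ (by omega) he1 F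
  have hbox2 : 0 ≤ boxNorm V s ℓ₂ F := boxNorm_nonneg s ℓ₂ (by omega) he2 F
  have hkey : Lam V s ℓ₁ (fun _ => F) ≤ (boxNorm V s ℓ₂ F) ^ (ℓ₁ ^ s : ℕ) := by
    calc Lam V s ℓ₁ (fun _ => F) = Lam V s ℓ₂ f := hmarg.symm
      _ ≤ |Lam V s ℓ₂ f| := le_abs_self _
      _ ≤ ∏ ω' : Fin s → Fin ℓ₂, (Lam V s ℓ₂ fun _ => f ω') ^ (((ℓ₂:ℝ)^s)⁻¹) := hgcs
      _ = (boxNorm V s ℓ₂ F) ^ (ℓ₁ ^ s : ℕ) := hprod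
  rw [boxNorm_eq]
  calc (Lam V s ℓ₁ (fun _ => F)) ^ (((ℓ₁:ℝ)^s)⁻¹)
      ≤ ((boxNorm V s ℓ₂ F) ^ (ℓ₁ ^ s : ℕ)) ^ (((ℓ₁:ℝ)^s)⁻¹) :=
        Real.rpow_le_rpow hL1nn hkey (by positivity)
    _ = boxNorm V s ℓ₂ F := rpow_pow_inv s ℓ₁ h1 hbox2

end Assemble3


theorem stmt16 (V : Type) [Fintype V] [Nonempty V] (s : ℕ) (hs : 2 ≤ s) :
    (∀ ℓ : ℕ, 2 ≤ ℓ → Even ℓ →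
      (∀ F : (Fin s → V) → ℝ, 0 ≤ boxNorm V s ℓ F) ∧
      (∀ F : (Fin s → V) → ℝ, boxNorm V s ℓ F = 0 ↔ F = fun _ => 0) ∧
      (∀ (c : ℝ) (F : (Fin s → V) → ℝ),
        boxNorm V s ℓ (fun x => c * F x) = |c| * boxNorm V s ℓ F) ∧
      (∀ F G : (Fin s → V) → ℝ,
        boxNorm V s ℓ (fun x => F x + G x) ≤ boxNorm V s ℓ F + boxNorm V s ℓ G)) ∧
    (∀ ℓ₁ ℓ₂ : ℕ, 2 ≤ ℓ₁ → ℓ₁ ≤ ℓ₂ → Even ℓ₁ → Even ℓ₂ →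
      ∀ F : (Fin s → V) → ℝ, boxNorm V s ℓ₁ F ≤ boxNorm V s ℓ₂ F) := by
  refine ⟨fun ℓ hl2 hev => ⟨fun F => boxNorm_nonneg s ℓ (by omega) hev F,
    fun F => box_zero_iff s ℓ hs hl2 hev F,
    fun c F => box_smul s ℓ (by omega) hl2 hev c F,
    fun F G => box_triangle s ℓ (by omega) hl2 hev F G⟩,
    fun ℓ₁ ℓ₂ h1 h12 he1 he2 F => box_mono s ℓ₁ ℓ₂ hs h1 h12 he1 he2 F⟩
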